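/- Among the pairs (m,n) ∈ {(1,1),(1,2),(1,7),(3,5),(7,10),(30,36),(715,806),(7476,7567)} with m+n > 8, the pair (715,806) is the unique one for which the diagonal matrix A with m entries −1/2 and n entries 1/2 satisfies σ₁(A) > 0, σ₂(A) > 0, and σ₃(A) > 0 simultaneously. -/

import Mathlib

open Finset

/-- k-th elementary symmetric polynomial of the diagonal entries of a
diagonal matrix, represented by its vector of diagonal entries. -/
def esymm {d : ℕ} (k : ℕ) (B : Fin d → ℝ) : ℝ :=
  ∑ s ∈ Finset.powersetCard k (Finset.univ : Finset (Fin d)), ∏ i ∈ s, B i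

/-- Polarized elementary symmetric function σ_{k,ℓ}(B,C):
(1/k!) times the sum over k-tuples of pairwise distinct indices of the product
of ℓ diagonal entries of B and k-ℓ diagonal entries of C. -/
noncomputable def sigmaPol (k ℓ : ℕ) {d : ℕ} (B C : Fin d → ℝ) : ℝ :=
  ((Nat.factorial k : ℝ))⁻¹ *
    ∑ f ∈ Finset.univ.filter (fun f : Fin k → Fin d => Function.Injective f),
      ∏ j : Fin k, (if (j : ℕ) < ℓ then B (f j) else C (f j))

/-- Polarized Newton tensor T_{k,ℓ}(B,C) at diagonal index i. -/
noncomputable def TPol (k ℓ : ℕ) {d : ℕ} (B C : Fin d → ℝ) (i : Fin d) : ℝ :=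
  ((Nat.factorial k : ℝ))⁻¹ *
    ∑ f ∈ Finset.univ.filter
        (fun f : Fin k → Fin d => Function.Injective f ∧ ∀ j, f j ≠ i),
      ∏ j : Fin k, (if (j : ℕ) < ℓ then B (f j) else C (f j))

/-- Newton tensor T_k(B) at diagonal index i, for a diagonal matrix B. -/
noncomputable def newton (k : ℕ) {d : ℕ} (B : Fin d → ℝ) (i : Fin d) : ℝ :=
  TPol k k B B i

lemma esymm_cons' (a : ℝ) (s : Multiset ℝ) (k : ℕ) :
    (a ::ₘ s).esymm (k+1) = s.esymm (k+1) + a * s.esymm k := by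
  simp [Multiset.esymm, Multiset.powersetCard_cons, Multiset.map_map,
    Function.comp, Multiset.sum_map_mul_left]

lemma esymm_replicate' (b : ℝ) (n k : ℕ) :
    (Multiset.replicate n b).esymm k = n.choose k * b ^ k := by
  induction n generalizing k with
  | zero => cases k <;> simp [Multiset.esymm, Multiset.powersetCard_zero_right]
  | succ n ih =>
    cases k with
    | zero => simp [Multiset.esymm]
    | succ k =>
      rw [Multiset.replicate_succ, esymm_cons', ih, ih, Nat.choose_succ_succ']
      push_cast; ring

lemma conv_step (a b : ℝ) (m n k : ℕ) :
    ∑ j ∈ Finset.range (k+2), (((m+1).choose (k+1-j) : ℝ)) * n.choose j * a^(k+1-j) * b^j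
      = ∑ j ∈ Finset.range (k+2), ((m.choose (k+1-j) : ℝ)) * n.choose j * a^(k+1-j) * b^j
        + a * ∑ j ∈ Finset.range (k+1), ((m.choose (k-j) : ℝ)) * n.choose j * a^(k-j) * b^j := by
  rw [Finset.mul_sum, Finset.sum_range_succ, Finset.sum_range_succ
    (fun j => ((m.choose (k+1-j) : ℝ)) * n.choose j * a^(k+1-j) * b^j)]
  rw [Finset.sum_congr rfl (fun j hj => show
      (((m+1).choose (k+1-j) : ℝ)) * n.choose j * a^(k+1-j) * b^j
        = ((m.choose (k+1-j) : ℝ)) * n.choose j * a^(k+1-j) * b^j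
          + a * (((m.choose (k-j) : ℝ)) * n.choose j * a^(k-j) * b^j) from by
    have hjk : j ≤ k := by
      have := Finset.mem_range.mp hj; omega
    have h1 : k + 1 - j = (k - j) + 1 := by omega
    rw [h1, Nat.choose_succ_succ']
    push_cast; ring), Finset.sum_add_distrib]
  have h2 : k + 1 - (k+1) = 0 := by omega
  rw [h2]
  simp only [Nat.choose_zero_right]
  push_cast; ring

lemma esymm_rep_add (a b : ℝ) (m n k : ℕ) :
    (Multiset.replicate m a + Multiset.replicate n b).esymm k
      = ∑ j ∈ Finset.range (k+1),
          (m.choose (k-j) : ℝ) * n.choose j * a^(k-j) * b^j := by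
  induction m generalizing k with
  | zero =>
    rw [Finset.sum_eq_single k]
    · simp [esymm_replicate']
    · intro j hj hne
      have : 0 < k - j := by
        simp only [Finset.mem_range] at hj; omega
      rw [Nat.choose_eq_zero_of_lt this]
      simp
    · intro h; exact absurd (Finset.self_mem_range_succ k) h
  | succ m ih =>
    cases k with
    | zero => simp [Multiset.esymm]
    | succ k =>
      rw [Multiset.replicate_succ, Multiset.cons_add, esymm_cons', ih, ih, conv_step]

lemma map_univ_val (a b : ℝ) (m n : ℕ) :
    (Finset.univ.val : Multiset (Fin (m+n))).map
        (fun i : Fin (m+n) => if (i:ℕ) < m then a else b)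
      = Multiset.replicate m a + Multiset.replicate n b := by
  rw [← Finset.univ_map_equiv_to_embedding (finSumFinEquiv (m := m) (n := n)),
    Finset.map_val, Multiset.map_map, ← Finset.univ_disjSum_univ, Finset.val_disjSum]
  rw [Multiset.disjSum, Multiset.map_add, Multiset.map_map, Multiset.map_map]
  congr 1
  · rw [Multiset.map_congr rfl (fun i _ => show _ = a from by
      simp [finSumFinEquiv_apply_left, i.isLt])]
    simp [Multiset.map_const']
  · rw [Multiset.map_congr rfl (fun i _ => show _ = b from by
      simp [finSumFinEquiv_apply_right])]
    simp [Multiset.map_const']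

lemma esymm_formula (a b : ℝ) (m n k : ℕ) :
    esymm k (fun i : Fin (m+n) => if (i:ℕ) < m then a else b)
      = ∑ j ∈ Finset.range (k+1),
          (m.choose (k-j) : ℝ) * n.choose j * a^(k-j) * b^j := by
  rw [esymm, ← Finset.esymm_map_val, map_univ_val, esymm_rep_add]

/-- Among the σ₄ = 0 pairs with m + n > 8, only (715,806) satisfies the
ellipticity conditions σ₁ > 0, σ₂ > 0, σ₃ > 0. -/
theorem stmt18 (m n : ℕ)
    (hmem : (m, n) ∈ [(1,1), (1,2), (1,7), (3,5), (7,10), (30,36), (715,806),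
      (7476,7567)])
    (hdim : 8 < m + n) :
    (0 < esymm 1 (fun i : Fin (m + n) =>
        if (i : ℕ) < m then (-1/2 : ℝ) else 1/2) ∧
     0 < esymm 2 (fun i : Fin (m + n) =>
        if (i : ℕ) < m then (-1/2 : ℝ) else 1/2) ∧
     0 < esymm 3 (fun i : Fin (m + n) =>
        if (i : ℕ) < m then (-1/2 : ℝ) else 1/2)) ↔
      (m, n) = (715, 806) := by
  simp only [List.mem_cons, List.not_mem_nil, or_false] at hmem
  rcases hmem with h|h|h|h|h|h|h|h <;>
    obtain ⟨rfl, rfl⟩ := Prod.mk.inj h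
  · omega
  · omega
  · omega
  · omega
  · -- (7,10)
    refine iff_of_false (fun ⟨_, h2, _⟩ => ?_) (by simp)
    rw [esymm_formula] at h2
    norm_num [Finset.sum_range_succ, Nat.choose_eq_descFactorial_div_factorial,
      Nat.descFactorial, Nat.factorial] at h2
  · -- (30,36)
    refine iff_of_false (fun ⟨_, h2, _⟩ => ?_) (by simp)
    rw [esymm_formula] at h2
    norm_num [Finset.sum_range_succ, Nat.choose_eq_descFactorial_div_factorial,
      Nat.descFactorial, Nat.factorial] at h2
  · -- (715,806)
    refine iff_of_true ⟨?_, ?_, ?_⟩ rfl <;> rw [esymm_formula] <;>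
      norm_num [Finset.sum_range_succ, Nat.choose_eq_descFactorial_div_factorial,
        Nat.descFactorial, Nat.factorial]
  · -- (7476,7567)
    refine iff_of_false (fun ⟨_, h2, _⟩ => ?_) (by simp)
    rw [esymm_formula] at h2
    norm_num [Finset.sum_range_succ, Nat.choose_eq_descFactorial_div_factorial,
      Nat.descFactorial, Nat.factorial] at h2
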